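/- For every ε ∈ (0,1), the Hausdorff dimensions of the sets of good and bad channels of the binary erasure channel with erasure probability ε satisfy dim_H(G_ε) = 1 and dim_H(B_ε) = 1. -/

import Mathlib

open Filter Set MeasureTheory

noncomputable section

/-- `g_0(z) = 2z - z²` (bit `false`), `g_1(z) = z²` (bit `true`). -/
def gBit (c : Bool) (z : ℝ) : ℝ := if c then z ^ 2 else 2 * z - z ^ 2

/-- `pPre b n z = g_{b_n}(g_{b_{n-1}}(⋯ g_{b_1}(z) ⋯))`, where `b_i` is `b (i-1)`. -/
def pPre (b : ℕ → Bool) : ℕ → ℝ → ℝ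
  | 0, z => z
  | n + 1, z => gBit (b n) (pPre b n z)

/-- `f(b) = Σ_{n ≥ 1} b_n 2^{-n}`. -/
def fBin (b : ℕ → Bool) : ℝ := ∑' n : ℕ, (if b n then (1 : ℝ) else 0) / 2 ^ (n + 1)

/-- The dyadic rationals in `[0,1]`. -/
def dyadics : Set ℝ := Set.Icc 0 1 ∩ {x : ℝ | ∃ (p : ℤ) (n : ℕ), x = (p : ℝ) / 2 ^ n}

/-- The good channels of a BEC with erasure probability `ε`: `x ∈ [0,1]` such that some binary
expansion `b` of `x` satisfies `p_{b^n}(ε) → 0`. -/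
def Gset (ε : ℝ) : Set ℝ :=
  {x : ℝ | ∃ b : ℕ → Bool, fBin b = x ∧ Tendsto (fun n => pPre b n ε) atTop (nhds 0)}

/-- The bad channels of a BEC with erasure probability `ε`: `x ∈ [0,1]` such that some binary
expansion `b` of `x` satisfies `p_{b^n}(ε) → 1`. -/
def Bset (ε : ℝ) : Set ℝ :=
  {x : ℝ | ∃ b : ℕ → Bool, fBin b = x ∧ Tendsto (fun n => pPre b n ε) atTop (nhds 1)}

/-- Hamming weight `w(b^n)` of the length-`n` prefix of `b`. -/
def wPre (b : ℕ → Bool) (n : ℕ) : ℕ := ∑ i ∈ Finset.range n, (if b i then 1 else 0)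

/-- `b` is `ρ`-heavy: `liminf_{n→∞} (w(b^n) - nρ) ≥ 0` (the liminf computed in `EReal`),
equivalently `liminf 2^{w(b^n)} / 2^{nρ} ≥ 1`. -/
def Heavy (ρ : ℝ) (b : ℕ → Bool) : Prop :=
  0 ≤ atTop.liminf (fun n : ℕ => (((wPre b n : ℝ) - n * ρ : ℝ) : EReal))

/-- The set of `ρ`-heavy channels. -/
def Hset (ρ : ℝ) : Set ℝ := {x : ℝ | ∃ b : ℕ → Bool, fBin b = x ∧ Heavy ρ b}



open scoped NNReal ENNReal

namespace BEC

abbrev e (b : ℕ → Bool) (n : ℕ) : ℝ := (if b n then (1 : ℝ) else 0) / 2 ^ (n + 1)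

lemma e_nonneg (b : ℕ → Bool) (n : ℕ) : 0 ≤ e b n := by
  unfold e; positivity

lemma e_le (b : ℕ → Bool) (n : ℕ) : e b n ≤ (1:ℝ) / 2 ^ (n+1) := by
  unfold e
  split
  · exact le_refl _
  · rw [zero_div]; positivity

lemma summable_geom' : Summable (fun n : ℕ => (1:ℝ) / 2 ^ (n+1)) := by
  have := (summable_geometric_two).mul_left (1/2 : ℝ)
  refine this.congr fun n => ?_
  field_simp
  rw [pow_succ, ← mul_assoc, ← mul_pow]; norm_num

lemma summable_e (b : ℕ → Bool) : Summable (e b) :=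
  Summable.of_nonneg_of_le (e_nonneg b) (e_le b) summable_geom'

lemma tsum_geom' : ∑' n : ℕ, (1:ℝ) / 2 ^ (n+1) = 1 := by
  calc ∑' n : ℕ, (1:ℝ) / 2 ^ (n+1) = ∑' n : ℕ, ((1:ℝ)/2) * ((1/2) ^ n) := by
        exact tsum_congr fun n => by rw [pow_succ]; field_simp; rw [← mul_pow]; norm_num
    _ = ((1:ℝ)/2) * ∑' n : ℕ, ((1:ℝ)/2) ^ n := tsum_mul_left
    _ = 1 := by rw [tsum_geometric_two]; norm_num

lemma tsum_geom_from (N : ℕ) : ∑' n : ℕ, (1:ℝ) / 2 ^ (n + N + 1) = (1/2) ^ N := by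
  have : ∀ n : ℕ, (1:ℝ) / 2 ^ (n + N + 1) = ((1:ℝ)/2)^N * ((1:ℝ) / 2 ^ (n+1)) := by
    intro n
    rw [div_pow, one_pow]
    rw [show n + N + 1 = (n+1) + N by ring, pow_add]
    field_simp
  rw [tsum_congr this, tsum_mul_left, tsum_geom', mul_one]

lemma fBin_eq_sum_add (b : ℕ → Bool) (N : ℕ) :
    fBin b = (∑ i ∈ Finset.range N, e b i) + ∑' n : ℕ, e b (n + N) :=
  (Summable.sum_add_tsum_nat_add N (summable_e b)).symm

lemma tail_nonneg (b : ℕ → Bool) (N : ℕ) : 0 ≤ ∑' n : ℕ, e b (n + N) :=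
  tsum_nonneg fun n => e_nonneg b _

lemma tail_le (b : ℕ → Bool) (N : ℕ) : ∑' n : ℕ, e b (n + N) ≤ (1/2) ^ N := by
  rw [← tsum_geom_from N]
  refine Summable.tsum_le_tsum (fun n => ?_) ((summable_nat_add_iff N).2 (summable_e b)) ?_
  · exact e_le b (n + N)
  · have := (summable_nat_add_iff (f := fun n : ℕ => (1:ℝ)/2^(n+1)) N).2 summable_geom'
    refine this.congr fun n => by ring_nf
lemma fBin_nonneg (b : ℕ → Bool) : 0 ≤ fBin b := tsum_nonneg fun n => e_nonneg b n

lemma fBin_le_one (b : ℕ → Bool) : fBin b ≤ 1 := by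
  rw [← tsum_geom']
  exact Summable.tsum_le_tsum (e_le b) (summable_e b) summable_geom'

end BEC

-- L1: agreement upper bound and finite geometric sums, separation
namespace BEC

lemma abs_fBin_sub_le {b b' : ℕ → Bool} {n : ℕ} (h : ∀ i < n, b i = b' i) :
    |fBin b - fBin b'| ≤ (1/2) ^ n := by
  rw [fBin_eq_sum_add b n, fBin_eq_sum_add b' n]
  have hs : (∑ i ∈ Finset.range n, e b i) = ∑ i ∈ Finset.range n, e b' i := by
    refine Finset.sum_congr rfl fun i hi => ?_
    rw [Finset.mem_range] at hi
    unfold e; rw [h i hi]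
  rw [hs]
  rw [add_sub_add_left_eq_sub]
  rw [abs_sub_le_iff]
  constructor
  · linarith [tail_le b n, tail_nonneg b' n]
  · linarith [tail_le b' n, tail_nonneg b n]

lemma sum_Ico_geom (a c : ℕ) (h : a ≤ c) :
    ∑ i ∈ Finset.Ico a c, (1:ℝ)/2^(i+1) = (1/2)^a - (1/2)^c := by
  induction c with
  | zero => interval_cases a; simp
  | succ c ih =>
    rcases Nat.lt_or_ge a (c+1) with hl | hg
    · have hac : a ≤ c := Nat.lt_succ_iff.mp hl
      rw [Finset.sum_Ico_succ_top hac, ih hac]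
      rw [← one_div_pow]
      ring
    · have : a = c+1 := le_antisymm h hg
      subst this
      simp

/-- Separation: if `b, b'` agree below `m`, differ at `m` (`b m = true`),
and both are `true` at some `i₁ > m`, then `fBin b - fBin b' ≥ (1/2)^(i₁+1)`. -/
lemma fBin_sep {b b' : ℕ → Bool} {m i₁ : ℕ} (hag : ∀ i < m, b i = b' i)
    (hbm : b m = true) (hbm' : b' m = false) (hmi : m < i₁)
    (h1 : b i₁ = true) (h1' : b' i₁ = true) :
    (1/2) ^ (i₁ + 1) ≤ fBin b - fBin b' := by
  set N := i₁ + 1 with hN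
  have hb_lower : (∑ i ∈ Finset.range N, e b i) ≤ fBin b := by
    rw [fBin_eq_sum_add b N]; linarith [tail_nonneg b N]
  have hb'_upper : fBin b' ≤ (∑ i ∈ Finset.range N, e b' i) + (1/2)^N := by
    rw [fBin_eq_sum_add b' N]; linarith [tail_le b' N]
  have hmN : m < N := Nat.lt_succ_of_lt hmi
  have key : (∑ i ∈ Finset.range N, e b i) - (∑ i ∈ Finset.range N, e b' i)
      ≥ (1/2)^(i₁+1) + (1/2)^N := by
    rw [← Finset.sum_sub_distrib]
    set d : ℕ → ℝ := fun i => e b i - e b' i with hd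
    have hsplit : ∑ i ∈ Finset.range N, d i
        = (∑ i ∈ Finset.Ico 0 m, d i) + ∑ i ∈ Finset.Ico m N, d i := by
      rw [Finset.range_eq_Ico, ← Finset.sum_Ico_consecutive _ (Nat.zero_le m) hmN.le]
    have h0 : ∑ i ∈ Finset.Ico 0 m, d i = 0 := by
      refine Finset.sum_eq_zero fun i hi => ?_
      rw [Finset.mem_Ico] at hi
      simp only [hd, e, hag i hi.2, sub_self]
    have hbot : ∑ i ∈ Finset.Ico m N, d i = d m + ∑ i ∈ Finset.Ico (m+1) N, d i :=
      Finset.sum_eq_sum_Ico_succ_bot hmN d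
    have hdm : d m = (1:ℝ)/2^(m+1) := by
      simp only [hd, e, hbm, hbm']
      norm_num
    have hi₁mem : i₁ ∈ Finset.Ico (m+1) N := by
      rw [Finset.mem_Ico]; exact ⟨hmi, Nat.lt_succ_self _⟩
    have hpull : ∑ i ∈ Finset.Ico (m+1) N, d i
        = d i₁ + ∑ i ∈ (Finset.Ico (m+1) N).erase i₁, d i :=
      (Finset.add_sum_erase _ d hi₁mem).symm
    have hdi₁ : d i₁ = 0 := by
      simp only [hd, e, h1, h1']; ring
    have herase : ∑ i ∈ (Finset.Ico (m+1) N).erase i₁, d i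
        ≥ - ∑ i ∈ (Finset.Ico (m+1) N).erase i₁, (1:ℝ)/2^(i+1) := by
      rw [← Finset.sum_neg_distrib]
      refine Finset.sum_le_sum fun i _ => ?_
      have := e_le b' i
      have := e_nonneg b i
      simp only [hd]
      linarith
    have hgeo : ∑ i ∈ (Finset.Ico (m+1) N).erase i₁, (1:ℝ)/2^(i+1)
        = ((1/2)^(m+1) - (1/2)^N) - (1/2)^(i₁+1) := by
      have := Finset.add_sum_erase _ (fun i => (1:ℝ)/2^(i+1)) hi₁mem
      have hIco : ∑ i ∈ Finset.Ico (m+1) N, (1:ℝ)/2^(i+1) = (1/2)^(m+1) - (1/2)^N :=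
        sum_Ico_geom _ _ (Nat.succ_le_of_lt hmN)
      have h121 : (1:ℝ)/2^(i₁+1) = (1/2)^(i₁+1) := by rw [div_pow, one_pow]
      linarith
    have hmain : (1:ℝ)/2^(m+1) = (1/2)^(m+1) := by rw [div_pow, one_pow]
    have hNi : ((1:ℝ)/2)^N = (1/2)^(i₁+1) := by rw [hN]
    rw [hsplit, h0, hbot, hpull, hdm, hdi₁]
    have := herase
    rw [hgeo] at this
    linarith
  linarith

end BEC

namespace BEC

/-- Insertion map: digit `i < M` is forced `true`; after that, in each block of
length `L+2`, the first `L` digits are free and the last `2` are forced `true`. -/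
def ins (L M : ℕ) (c : ℕ → Bool) : ℕ → Bool := fun i =>
  if i < M then true
  else if L ≤ (i - M) % (L + 2) then true
  else c (L * ((i - M) / (L + 2)) + (i - M) % (L + 2))

/-- Position of the `j`-th free digit. -/
def pos (L M : ℕ) (j : ℕ) : ℕ := M + (L + 2) * (j / L) + j % L

lemma pos_eq (L M j : ℕ) : pos L M j = M + j + 2 * (j / L) := by
  have h := Nat.div_add_mod j L
  unfold pos
  calc M + (L + 2) * (j / L) + j % L = M + (L * (j / L) + j % L) + 2 * (j / L) := by ring
    _ = M + j + 2 * (j / L) := by rw [h]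

lemma pos_strictMono (L M : ℕ) : StrictMono (pos L M) := by
  intro a b hab
  rw [pos_eq, pos_eq]
  have : a / L ≤ b / L := Nat.div_le_div_right hab.le
  omega

lemma ins_pos {L : ℕ} (hL : 0 < L) (M : ℕ) (c : ℕ → Bool) (j : ℕ) :
    ins L M c (pos L M j) = c j := by
  have hrl : j % L < L := Nat.mod_lt _ hL
  have hsub : pos L M j - M = (L + 2) * (j / L) + j % L := by
    unfold pos; omega
  have hnotlt : ¬ (pos L M j < M) := by rw [pos_eq]; omega
  have hmod : ((L + 2) * (j / L) + j % L) % (L + 2) = j % L := by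
    rw [Nat.mul_add_mod]
    exact Nat.mod_eq_of_lt (by omega)
  have hdiv : ((L + 2) * (j / L) + j % L) / (L + 2) = j / L := by
    have h1 : ((L + 2) * (j / L) + j % L) / (L + 2) = j / L + (j % L) / (L + 2) :=
      Nat.mul_add_div (by omega) _ _
    have h2 : (j % L) / (L + 2) = 0 := Nat.div_eq_of_lt (by omega)
    omega
  unfold ins
  rw [if_neg hnotlt, hsub, hmod, hdiv, if_neg (by omega)]
  congr 1
  have := Nat.div_add_mod j L
  omega

lemma ins_lt {L M : ℕ} (c : ℕ → Bool) {i : ℕ} (h : i < M) : ins L M c i = true := by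
  unfold ins; rw [if_pos h]

lemma ins_forced {L M : ℕ} (c : ℕ → Bool) {i : ℕ} (h1 : M ≤ i)
    (h2 : L ≤ (i - M) % (L + 2)) : ins L M c i = true := by
  unfold ins; rw [if_neg (by omega), if_pos h2]

/-- every non-forced position is `pos` of its free index -/
lemma pos_of_free {L M : ℕ} (hL : 0 < L) {i : ℕ} (h1 : M ≤ i)
    (h2 : (i - M) % (L + 2) < L) :
    pos L M (L * ((i - M) / (L + 2)) + (i - M) % (L + 2)) = i := by
  set q := (i - M) / (L + 2)
  set r := (i - M) % (L + 2)
  have hjdiv : (L * q + r) / L = q + r / L := Nat.mul_add_div hL _ _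
  have hrL : r / L = 0 := Nat.div_eq_of_lt h2
  have hjmod : (L * q + r) % L = r := by
    rw [Nat.mul_add_mod]
    exact Nat.mod_eq_of_lt h2
  have hi : (L + 2) * q + r = i - M := Nat.div_add_mod (i - M) (L + 2)
  unfold pos
  rw [hjdiv, hrL, add_zero, hjmod]
  omega

lemma ins_agree {L M : ℕ} (hL : 0 < L) {c c' : ℕ → Bool} {n : ℕ}
    (h : ∀ j < n, c j = c' j) : ∀ i < pos L M n, ins L M c i = ins L M c' i := by
  intro i hi
  by_cases h1 : i < M
  · rw [ins_lt c h1, ins_lt c' h1]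
  · push_neg at h1
    by_cases h2 : L ≤ (i - M) % (L + 2)
    · rw [ins_forced c h1 h2, ins_forced c' h1 h2]
    · push_neg at h2
      set j' := L * ((i - M) / (L + 2)) + (i - M) % (L + 2) with hj'
      have hpj : pos L M j' = i := pos_of_free hL h1 h2
      have hj'n : j' < n := by
        have := (pos_strictMono L M).lt_iff_lt (a := j') (b := n)
        rw [hpj] at this
        exact this.mp hi
      unfold ins
      rw [if_neg (by omega), if_neg (by omega), if_neg (by omega), if_neg (by omega)]
      exact h _ hj'n

/-- the first forced position after `pos L M n` -/
lemma forced_after {L : ℕ} (hL : 0 < L) (M : ℕ) (c : ℕ → Bool) (n : ℕ) :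
    ins L M c (M + (L + 2) * (n / L) + L) = true := by
  refine ins_forced c (by omega) ?_
  have : (M + (L + 2) * (n / L) + L - M) = (L + 2) * (n / L) + L := by omega
  rw [this, Nat.mul_add_mod, Nat.mod_eq_of_lt (by omega)]

lemma pos_lt_forced {L : ℕ} (hL : 0 < L) (M n : ℕ) :
    pos L M n < M + (L + 2) * (n / L) + L ∧ M + (L + 2) * (n / L) + L ≤ pos L M n + L := by
  have : n % L < L := Nat.mod_lt _ hL
  unfold pos
  omega

/-- Key separation for the insertion map. -/
lemma ins_sep {L : ℕ} (hL : 0 < L) (M : ℕ) {c c' : ℕ → Bool} {n : ℕ}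
    (hag : ∀ j < n, c j = c' j) (hne : c n ≠ c' n) :
    (1/2 : ℝ) ^ (pos L M n + L + 1) ≤ |fBin (ins L M c) - fBin (ins L M c')| := by
  set m := pos L M n
  set i₁ := M + (L + 2) * (n / L) + L with hi₁
  obtain ⟨hmi, hiup⟩ := pos_lt_forced hL M n
  have hagree : ∀ i < m, ins L M c i = ins L M c' i := ins_agree hL hag
  have hpow : ((1:ℝ)/2) ^ (m + L + 1) ≤ (1/2) ^ (i₁ + 1) := by
    apply pow_le_pow_of_le_one (by norm_num) (by norm_num)
    omega
  have hcc : ∀ (a b : ℕ → Bool), a n = true → b n = false →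
      (∀ j < n, a j = b j) → (1/2 : ℝ) ^ (m + L + 1) ≤ fBin (ins L M a) - fBin (ins L M b) := by
    intro a b han hbn hab
    have h1 : ins L M a (pos L M n) = true := by rw [ins_pos hL M a n]; exact han
    have h2 : ins L M b (pos L M n) = false := by rw [ins_pos hL M b n]; exact hbn
    have hsep := fBin_sep (ins_agree hL hab) h1 h2 hmi
      (forced_after hL M a n) (forced_after hL M b n)
    exact le_trans hpow hsep
  cases hcn : c n with
  | false =>
    have hcn' : c' n = true := by
      cases hc' : c' n
      · exact absurd (hcn.trans hc'.symm) hne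
      · rfl
    have := hcc c' c hcn' hcn (fun j hj => (hag j hj).symm)
    rw [abs_sub_comm]
    exact this.trans (le_abs_self _)
  | true =>
    have hcn' : c' n = false := by
      cases hc' : c' n
      · rfl
      · exact absurd (hcn.trans hc'.symm) hne
    exact (hcc c c' hcn hcn' hag).trans (le_abs_self _)

lemma ins_inj {L : ℕ} (hL : 0 < L) (M : ℕ) :
    Function.Injective (fun c => fBin (ins L M c)) := by
  intro c c' h
  by_contra hne
  have hex : ∃ n, c n ≠ c' n := by
    by_contra hall
    push_neg at hall
    exact hne (funext hall)
  set n := Nat.find hex with hn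
  have hsep := ins_sep hL M (fun j hj => by
      have := Nat.find_min hex hj
      simpa using this) (Nat.find_spec hex)
  have h' : fBin (ins L M c) = fBin (ins L M c') := h
  rw [h', sub_self, abs_zero] at hsep
  have : (0:ℝ) < (1/2) ^ (pos L M n + L + 1) := by positivity
  linarith

end BEC

namespace BEC

lemma pPre_succ (b : ℕ → Bool) (n : ℕ) (z : ℝ) :
    pPre b (n+1) z = gBit (b n) (pPre b n z) := rfl

lemma gBit_mem (c : Bool) {z : ℝ} (h : z ∈ Icc (0:ℝ) 1) : gBit c z ∈ Icc (0:ℝ) 1 := by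
  obtain ⟨h0, h1⟩ := h
  unfold gBit
  cases c
  · rw [if_neg Bool.false_ne_true]; constructor <;> nlinarith
  · rw [if_pos rfl]; constructor <;> nlinarith

lemma pPre_mem (b : ℕ → Bool) {z : ℝ} (h : z ∈ Icc (0:ℝ) 1) (n : ℕ) :
    pPre b n z ∈ Icc (0:ℝ) 1 := by
  induction n with
  | zero => exact h
  | succ n ih => exact gBit_mem _ ih

lemma gBit_le_two_mul (c : Bool) {z : ℝ} (h : z ∈ Icc (0:ℝ) 1) : gBit c z ≤ 2 * z := by
  obtain ⟨h0, h1⟩ := h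
  unfold gBit
  cases c
  · rw [if_neg Bool.false_ne_true]; nlinarith
  · rw [if_pos rfl]; nlinarith

lemma pPre_all_true {b : ℕ → Bool} {M : ℕ} (h : ∀ i < M, b i = true) (z : ℝ) :
    ∀ n ≤ M, pPre b n z = z ^ (2 ^ n) := by
  intro n hn
  induction n with
  | zero => simp [pPre]
  | succ n ih =>
    rw [pPre_succ, h n (by omega), ih (by omega)]
    unfold gBit
    rw [if_pos rfl, ← pow_mul, pow_succ]

lemma half_pow (n : ℕ) : ((1:ℝ)/2) ^ n = 1 / 2 ^ n := by rw [div_pow, one_pow]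

/-- Main dynamics estimate: along `ins L M c`, the erasure probability tends to `0`. -/
lemma tendsto_ins {ε : ℝ} (hε : ε ∈ Set.Ioo (0:ℝ) 1) {L M : ℕ} (hL : 0 < L)
    (hM : ε ^ (2 ^ M) ≤ (1/2 : ℝ) ^ (2 * L)) (c : ℕ → Bool) :
    Tendsto (fun n => pPre (ins L M c) n ε) atTop (nhds 0) := by
  set b := ins L M c with hb
  set p : ℕ → ℝ := fun n => pPre b n ε with hp
  have hε01 : ε ∈ Icc (0:ℝ) 1 := ⟨hε.1.le, hε.2.le⟩
  have h01 : ∀ n, p n ∈ Icc (0:ℝ) 1 := fun n => pPre_mem b hε01 n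
  -- within-block doubling bound
  have W : ∀ s j, p (s + j) ≤ 2 ^ j * p s := by
    intro s j
    induction j with
    | zero => simp
    | succ j ih =>
      have h1 : s + (j+1) = (s + j) + 1 := by ring
      rw [h1]
      have h2 : p ((s+j)+1) = gBit (b (s+j)) (p (s+j)) := rfl
      rw [h2]
      have h3 := gBit_le_two_mul (b (s+j)) (h01 (s+j))
      calc gBit (b (s+j)) (p (s+j)) ≤ 2 * p (s+j) := h3
        _ ≤ 2 * (2^j * p s) := by
            have := (h01 s).1
            nlinarith [h01 (s+j)]
        _ = 2^(j+1) * p s := by ring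
  -- forced squarings at block ends
  have sq1 : ∀ k, p (M + (L+2)*k + L + 1) = (p (M + (L+2)*k + L)) ^ 2 := by
    intro k
    have hbit : b (M + (L+2)*k + L) = true := by
      refine ins_forced c (by omega) ?_
      have h1 : M + (L+2)*k + L - M = (L+2)*k + L := by omega
      rw [h1, Nat.mul_add_mod, Nat.mod_eq_of_lt (by omega)]
    have : p (M + (L+2)*k + L + 1) = gBit (b (M + (L+2)*k + L)) (p (M + (L+2)*k + L)) := rfl
    rw [this, hbit]
    unfold gBit
    rw [if_pos rfl]
  have sq2 : ∀ k, p (M + (L+2)*k + L + 2) = (p (M + (L+2)*k + L + 1)) ^ 2 := by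
    intro k
    have hbit : b (M + (L+2)*k + L + 1) = true := by
      refine ins_forced c (by omega) ?_
      have h1 : M + (L+2)*k + L + 1 - M = (L+2)*k + (L+1) := by omega
      rw [h1, Nat.mul_add_mod, Nat.mod_eq_of_lt (by omega)]
      omega
    have : p (M + (L+2)*k + L + 2) = gBit (b (M + (L+2)*k + L + 1)) (p (M + (L+2)*k + L + 1)) := rfl
    rw [this, hbit]
    unfold gBit
    rw [if_pos rfl]
  -- block bound
  have Q : ∀ k, p (M + (L+2)*k) ≤ (1/2 : ℝ) ^ (2*L + k) := by
    intro k
    induction k with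
    | zero =>
      have hall : ∀ i < M, b i = true := fun i hi => ins_lt c hi
      have : p M = ε ^ (2^M) := pPre_all_true hall ε M le_rfl
      simpa [this] using hM
    | succ k ih =>
      set s := M + (L+2)*k with hs
      have hqnn := (h01 s).1
      have hpL : p (s + L) ≤ (1/2 : ℝ) ^ (L + k) := by
        calc p (s + L) ≤ 2^L * p s := W s L
          _ ≤ 2^L * (1/2)^(2*L+k) := by
              have : (0:ℝ) < 2^L := by positivity
              nlinarith [ih]
          _ = (1/2 : ℝ)^(L+k) := by
              rw [show 2*L + k = L + (L + k) by ring, pow_add, ← mul_assoc,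
                ← mul_pow]
              norm_num
      have hpLnn := (h01 (s + L)).1
      have h4 : p (s + L + 2) = (p (s+L))^4 := by
        rw [sq2 k, sq1 k, ← pow_mul]
      have hnext : M + (L+2)*(k+1) = s + L + 2 := by rw [hs]; ring
      rw [hnext, h4]
      calc (p (s+L))^4 ≤ ((1/2:ℝ)^(L+k))^4 := by
            exact pow_le_pow_left₀ hpLnn hpL 4
        _ = (1/2:ℝ)^(4*L+4*k) := by rw [← pow_mul]; ring_nf
        _ ≤ (1/2:ℝ)^(2*L + (k+1)) := by
            apply pow_le_pow_of_le_one (by norm_num) (by norm_num)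
            omega
  -- uniform bound within blocks
  have U : ∀ k j, j ≤ L + 1 → p (M + (L+2)*k + j) ≤ (1/2 : ℝ) ^ k := by
    intro k j hj
    set s := M + (L+2)*k with hs
    have hqk := Q k
    have hups : p (s + L) ≤ (1/2:ℝ)^(L+k) := by
      calc p (s + L) ≤ 2^L * p s := W s L
        _ ≤ 2^L * (1/2)^(2*L+k) := by
            have : (0:ℝ) < 2^L := by positivity
            nlinarith [(h01 s).1]
        _ = (1/2 : ℝ)^(L+k) := by
            rw [show 2*L + k = L + (L + k) by ring, pow_add, ← mul_assoc, ← mul_pow]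
            norm_num
    rcases Nat.lt_or_ge j (L+1) with hjl | hje
    · have hjL : j ≤ L := by omega
      calc p (s + j) ≤ 2^j * p s := W s j
        _ ≤ 2^L * (1/2)^(2*L+k) := by
            have h2j : (2:ℝ)^j ≤ 2^L := pow_le_pow_right₀ (by norm_num) hjL
            have := (h01 s).1
            nlinarith [Q k, pow_pos (show (0:ℝ) < 2 by norm_num) j]
        _ = (1/2 : ℝ)^(L+k) := by
            rw [show 2*L + k = L + (L + k) by ring, pow_add, ← mul_assoc, ← mul_pow]
            norm_num
        _ ≤ (1/2:ℝ)^k := by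
            apply pow_le_pow_of_le_one (by norm_num) (by norm_num)
            omega
    · have hj1 : j = L + 1 := by omega
      subst hj1
      have : p (s + L + 1) = (p (s + L))^2 := sq1 k
      have h1 : p (s + (L+1)) = (p (s+L))^2 := by
        rw [show s + (L+1) = s + L + 1 by ring]
        exact this
      rw [h1]
      have hle1 : p (s+L) ≤ 1 := (h01 (s+L)).2
      have hnn : 0 ≤ p (s+L) := (h01 (s+L)).1
      calc (p (s+L))^2 ≤ p (s+L) := by nlinarith
        _ ≤ (1/2:ℝ)^(L+k) := hups
        _ ≤ (1/2:ℝ)^k := by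
            apply pow_le_pow_of_le_one (by norm_num) (by norm_num)
            omega
  -- global bound
  have G : ∀ n, M ≤ n → p n ≤ (1/2 : ℝ) ^ ((n - M) / (L + 2)) := by
    intro n hn
    set k := (n - M) / (L + 2) with hk
    set r := (n - M) % (L + 2) with hr
    have hdm : (L + 2) * k + r = n - M := Nat.div_add_mod _ _
    have hmod : r < L + 2 := Nat.mod_lt _ (by omega)
    have hn' : n = M + (L+2) * k + r := by omega
    rw [hn']
    exact U k r (by omega)
  -- conclusion by squeezing
  have hdiv : Tendsto (fun n : ℕ => (n - M) / (L + 2)) atTop atTop := by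
    apply tendsto_atTop_atTop.2
    intro K
    refine ⟨M + (L+2) * K, fun n hn => ?_⟩
    have h1 : K * (L+2) ≤ n - M := by
      have hcomm : K * (L+2) = (L+2) * K := Nat.mul_comm _ _
      omega
    exact (Nat.le_div_iff_mul_le (by omega)).2 h1
  have hg : Tendsto (fun n : ℕ => ((1:ℝ)/2) ^ ((n - M) / (L + 2))) atTop (nhds 0) :=
    (tendsto_pow_atTop_nhds_zero_of_lt_one (by norm_num) (by norm_num)).comp hdiv
  refine squeeze_zero' ?_ ?_ hg
  · exact Eventually.of_forall fun n => (h01 n).1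
  · exact eventually_atTop.2 ⟨M, G⟩

end BEC

namespace BEC

open Classical in
def remSeq (x : ℝ) : ℕ → ℝ
  | 0 => x
  | n+1 => if (1:ℝ)/2^(n+1) ≤ remSeq x n then remSeq x n - 1/2^(n+1) else remSeq x n

open Classical in
def digSeq (x : ℝ) : ℕ → Bool := fun n =>
  if (1:ℝ)/2^(n+1) ≤ remSeq x n then true else false

lemma remSeq_bounds {x : ℝ} (hx : x ∈ Icc (0:ℝ) 1) (n : ℕ) :
    0 ≤ remSeq x n ∧ remSeq x n ≤ 1/2^n := by
  induction n with
  | zero => simpa [remSeq] using hx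
  | succ n ih =>
    have hrs : remSeq x (n+1)
        = if (1:ℝ)/2^(n+1) ≤ remSeq x n then remSeq x n - 1/2^(n+1) else remSeq x n := rfl
    rw [hrs]
    have h2 : (1:ℝ)/2^n = 1/2^(n+1) + 1/2^(n+1) := by
      rw [pow_succ]; ring
    by_cases hc : (1:ℝ)/2^(n+1) ≤ remSeq x n
    · rw [if_pos hc]
      constructor
      · linarith
      · linarith [ih.2]
    · rw [if_neg hc]
      push_neg at hc
      exact ⟨ih.1, hc.le⟩

lemma remSeq_partial {x : ℝ} (hx : x ∈ Icc (0:ℝ) 1) (n : ℕ) :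
    x = (∑ i ∈ Finset.range n, e (digSeq x) i) + remSeq x n := by
  induction n with
  | zero => simp [remSeq]
  | succ n ih =>
    rw [Finset.sum_range_succ]
    have hrs : remSeq x (n+1)
        = if (1:ℝ)/2^(n+1) ≤ remSeq x n then remSeq x n - 1/2^(n+1) else remSeq x n := rfl
    by_cases hc : (1:ℝ)/2^(n+1) ≤ remSeq x n
    · have hb : digSeq x n = true := by unfold digSeq; rw [if_pos hc]
      have he : e (digSeq x) n = 1/2^(n+1) := by unfold e; rw [hb]; norm_num
      rw [he, hrs, if_pos hc]
      linarith
    · have hb : digSeq x n = false := by unfold digSeq; rw [if_neg hc]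
      have he : e (digSeq x) n = 0 := by unfold e; rw [hb]; norm_num
      rw [he, hrs, if_neg hc]
      linarith

lemma fBin_surjOn {x : ℝ} (hx : x ∈ Icc (0:ℝ) 1) : ∃ b : ℕ → Bool, fBin b = x := by
  refine ⟨digSeq x, ?_⟩
  have hrem0 : Tendsto (fun n => remSeq x n) atTop (nhds 0) := by
    refine squeeze_zero (fun n => (remSeq_bounds hx n).1)
      (fun n => (remSeq_bounds hx n).2.trans_eq (half_pow n).symm) ?_
    exact tendsto_pow_atTop_nhds_zero_of_lt_one (by norm_num) (by norm_num)
  have hS : Tendsto (fun n => ∑ i ∈ Finset.range n, e (digSeq x) i) atTop (nhds x) := by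
    have : ∀ n, (∑ i ∈ Finset.range n, e (digSeq x) i) = x - remSeq x n := by
      intro n
      have := remSeq_partial hx n
      linarith
    rw [funext this]
    simpa using tendsto_const_nhds.sub hrem0
  have := (hasSum_iff_tendsto_nat_of_nonneg (e_nonneg (digSeq x)) x).2 hS
  exact this.tsum_eq

end BEC

namespace BEC

-- Extraction map: partial inverse of `c ↦ fBin (ins L M c)`.
open Classical in
def ext (L M : ℕ) : ℝ → ℝ := fun x =>
  if h : ∃ c : ℕ → Bool, fBin (ins L M c) = x then fBin h.choose else 0

def Kset (L M : ℕ) : Set ℝ := Set.range (fun c : ℕ → Bool => fBin (ins L M c))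

lemma ext_apply {L : ℕ} (hL : 0 < L) (M : ℕ) (c : ℕ → Bool) :
    ext L M (fBin (ins L M c)) = fBin c := by
  have hex : ∃ c' : ℕ → Bool, fBin (ins L M c') = fBin (ins L M c) := ⟨c, rfl⟩
  unfold ext
  rw [dif_pos hex]
  congr 1
  exact ins_inj hL M hex.choose_spec

lemma ext_holder_real {L : ℕ} (hL : 0 < L) (M : ℕ) (c c' : ℕ → Bool) :
    |fBin c - fBin c'| ≤ 2^(M+L+1) *
      |fBin (ins L M c) - fBin (ins L M c')| ^ ((L:ℝ)/((L:ℝ)+2)) := by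
  set r : ℝ := (L:ℝ)/((L:ℝ)+2) with hr
  have hr0 : 0 ≤ r := by positivity
  have hr1 : r ≤ 1 := by
    rw [hr, div_le_one (by positivity)]
    linarith
  by_cases hcc : c = c'
  · subst hcc
    simp only [sub_self, abs_zero]
    positivity
  · have hex : ∃ n, c n ≠ c' n := by
      by_contra hall
      push_neg at hall
      exact hcc (funext hall)
    set n := Nat.find hex with hn
    have hag : ∀ j < n, c j = c' j := fun j hj => by
      have := Nat.find_min hex hj
      simpa using this
    have hup : |fBin c - fBin c'| ≤ (1/2)^n := abs_fBin_sub_le hag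
    have hlow := ins_sep (M := M) hL hag (Nat.find_spec hex)
    set D := |fBin (ins L M c) - fBin (ins L M c')| with hD
    have hDnn : 0 ≤ D := abs_nonneg _
    set a : ℕ := pos L M n + L + 1 with ha
    -- rpow comparison
    have h1 : ((1/2:ℝ)^a) ^ r ≤ D ^ r :=
      Real.rpow_le_rpow (by positivity : (0:ℝ) ≤ (1/2:ℝ)^a) hlow hr0
    have h2 : ((1/2:ℝ)^a) ^ r = (1/2:ℝ) ^ ((a:ℝ) * r) := by
      rw [← Real.rpow_natCast (1/2 : ℝ) a, ← Real.rpow_mul (by norm_num)]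
    have hdivL : (↑(n / L) : ℝ) * L ≤ (n:ℝ) := by
      have := Nat.div_mul_le_self n L
      exact_mod_cast this
    have hposn : (pos L M n : ℝ) = M + n + 2 * (↑(n / L) : ℝ) := by
      rw [pos_eq]
      push_cast
      ring
    have hkey : (a:ℝ) * r ≤ (M:ℝ) + L + 1 + n := by
      have haR : (a:ℝ) = (M:ℝ) + n + 2 * (↑(n / L) : ℝ) + L + 1 := by
        rw [ha]
        push_cast [pos_eq]
        ring
      rw [haR, hr, mul_div_assoc', div_le_iff₀ (by positivity)]
      have hLpos : (0:ℝ) < L := by exact_mod_cast hL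
      nlinarith [hdivL, (Nat.cast_nonneg M : (0:ℝ) ≤ M), (Nat.cast_nonneg n : (0:ℝ) ≤ n)]
    have h3 : (1/2:ℝ) ^ ((M:ℝ) + L + 1 + n) ≤ (1/2:ℝ) ^ ((a:ℝ) * r) :=
      Real.rpow_le_rpow_of_exponent_ge (by norm_num) (by norm_num) hkey
    have h4 : (1/2:ℝ) ^ ((M:ℝ) + L + 1 + n) = (1/2:ℝ)^(M+L+1) * (1/2:ℝ)^n := by
      rw [← Real.rpow_natCast (1/2:ℝ) (M+L+1), ← Real.rpow_natCast (1/2:ℝ) n,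
        ← Real.rpow_add (by norm_num)]
      congr 1
      push_cast
      ring
    have h5 : (1/2:ℝ)^(M+L+1) * (1/2:ℝ)^n ≤ D ^ r := by
      calc (1/2:ℝ)^(M+L+1) * (1/2:ℝ)^n = (1/2:ℝ) ^ ((M:ℝ) + L + 1 + n) := h4.symm
        _ ≤ (1/2:ℝ) ^ ((a:ℝ) * r) := h3
        _ = ((1/2:ℝ)^a) ^ r := h2.symm
        _ ≤ D ^ r := h1
    have hC : (2:ℝ)^(M+L+1) * ((1/2:ℝ)^(M+L+1) * (1/2:ℝ)^n) = (1/2:ℝ)^n := by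
      rw [← mul_assoc, ← mul_pow]
      norm_num
    calc |fBin c - fBin c'| ≤ (1/2:ℝ)^n := hup
      _ = (2:ℝ)^(M+L+1) * ((1/2:ℝ)^(M+L+1) * (1/2:ℝ)^n) := hC.symm
      _ ≤ (2:ℝ)^(M+L+1) * D ^ r := by
          have : (0:ℝ) < 2^(M+L+1) := by positivity
          nlinarith [h5]

lemma ext_holder {L : ℕ} (hL : 0 < L) (M : ℕ) :
    HolderOnWith ((2:ℝ≥0)^(M+L+1)) ((L:ℝ≥0)/((L:ℝ≥0)+2)) (ext L M) (Kset L M) := by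
  intro x hx y hy
  obtain ⟨c, rfl⟩ := hx
  obtain ⟨c', rfl⟩ := hy
  rw [ext_apply hL M c, ext_apply hL M c']
  rw [edist_dist, edist_dist, Real.dist_eq, Real.dist_eq]
  have hrcoe : (((L:ℝ≥0)/((L:ℝ≥0)+2) : ℝ≥0) : ℝ) = (L:ℝ)/((L:ℝ)+2) := by
    push_cast
    rfl
  rw [hrcoe]
  have hreal := ext_holder_real hL M c c'
  set D := |fBin (ins L M c) - fBin (ins L M c')| with hD
  set r : ℝ := (L:ℝ)/((L:ℝ)+2) with hr
  have hr0 : 0 ≤ r := by positivity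
  calc ENNReal.ofReal |fBin c - fBin c'|
      ≤ ENNReal.ofReal ((2:ℝ)^(M+L+1) * D ^ r) := ENNReal.ofReal_le_ofReal hreal
    _ = ENNReal.ofReal ((2:ℝ)^(M+L+1)) * ENNReal.ofReal (D ^ r) := by
        rw [ENNReal.ofReal_mul (by positivity)]
    _ = ((2:ℝ≥0)^(M+L+1) : ℝ≥0∞) * ENNReal.ofReal D ^ r := by
        rw [ENNReal.ofReal_rpow_of_nonneg (abs_nonneg _) hr0]
        congr 1
        rw [ENNReal.ofReal_pow (by norm_num)]
        norm_num

lemma dimH_Kset {L : ℕ} (hL : 0 < L) (M : ℕ) :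
    (((L:ℝ≥0)/((L:ℝ≥0)+2) : ℝ≥0) : ℝ≥0∞) ≤ dimH (Kset L M) := by
  have himg : ext L M '' Kset L M = Set.range fBin := by
    ext y
    constructor
    · rintro ⟨x, ⟨c, rfl⟩, rfl⟩
      exact ⟨c, (ext_apply hL M c).symm⟩
    · rintro ⟨c, rfl⟩
      exact ⟨fBin (ins L M c), ⟨c, rfl⟩, ext_apply hL M c⟩
  have hrange : Set.range fBin = Icc (0:ℝ) 1 := by
    apply Set.Subset.antisymm
    · rintro y ⟨c, rfl⟩
      exact ⟨fBin_nonneg c, fBin_le_one c⟩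
    · intro y hy
      obtain ⟨b, hb⟩ := fBin_surjOn hy
      exact ⟨b, hb⟩
  have hdimIcc : dimH (Icc (0:ℝ) 1) = 1 := by
    rw [Real.dimH_of_mem_nhds (Icc_mem_nhds (show (0:ℝ) < 1/2 by norm_num)
      (show (1:ℝ)/2 < 1 by norm_num))]
    simp
  have hr0 : (0:ℝ≥0) < (L:ℝ≥0)/((L:ℝ≥0)+2) := by
    apply div_pos
    · exact_mod_cast hL
    · positivity
  have := (ext_holder hL M).dimH_image_le hr0
  rw [himg, hrange, hdimIcc] at this
  rw [ENNReal.le_div_iff_mul_le (Or.inl (by exact_mod_cast hr0.ne'))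
    (Or.inl ENNReal.coe_ne_top), one_mul] at this
  exact this

end BEC

namespace BEC

lemma dimH_Icc01 : dimH (Icc (0:ℝ) 1) = 1 := by
  rw [Real.dimH_of_mem_nhds (Icc_mem_nhds (show (0:ℝ) < 1/2 by norm_num)
    (show (1:ℝ)/2 < 1 by norm_num))]
  simp

lemma Kset_subset_Gset {ε : ℝ} (hε : ε ∈ Set.Ioo (0:ℝ) 1) {L M : ℕ} (hL : 0 < L)
    (hM : ε ^ (2 ^ M) ≤ (1/2 : ℝ) ^ (2 * L)) : Kset L M ⊆ Gset ε := by
  rintro x ⟨c, rfl⟩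
  exact ⟨ins L M c, rfl, tendsto_ins hε hL hM c⟩

lemma Gset_subset_Icc (ε : ℝ) : Gset ε ⊆ Icc (0:ℝ) 1 := by
  rintro x ⟨b, rfl, -⟩
  exact ⟨fBin_nonneg b, fBin_le_one b⟩

lemma Bset_subset_Icc (ε : ℝ) : Bset ε ⊆ Icc (0:ℝ) 1 := by
  rintro x ⟨b, rfl, -⟩
  exact ⟨fBin_nonneg b, fBin_le_one b⟩

lemma exists_M {ε : ℝ} (hε : ε ∈ Set.Ioo (0:ℝ) 1) (L : ℕ) :
    ∃ M : ℕ, ε ^ (2 ^ M) ≤ (1/2 : ℝ) ^ (2 * L) := by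
  obtain ⟨M, hM⟩ := exists_pow_lt_of_lt_one (show (0:ℝ) < (1/2)^(2*L) by positivity) hε.2
  refine ⟨M, le_trans ?_ hM.le⟩
  exact pow_le_pow_of_le_one hε.1.le hε.2.le (Nat.lt_two_pow_self (n := M)).le

lemma dimH_Gset {ε : ℝ} (hε : ε ∈ Set.Ioo (0:ℝ) 1) : dimH (Gset ε) = 1 := by
  apply le_antisymm
  · calc dimH (Gset ε) ≤ dimH (Icc (0:ℝ) 1) := dimH_mono (Gset_subset_Icc ε)
      _ = 1 := dimH_Icc01
  · apply ENNReal.le_of_forall_nnreal_lt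
    intro t ht
    have ht1 : (t:ℝ) < 1 := by exact_mod_cast ht
    have ht0 : (0:ℝ) ≤ t := t.coe_nonneg
    obtain ⟨L, hL, htL⟩ : ∃ L : ℕ, 0 < L ∧ (t:ℝ) ≤ (L:ℝ)/((L:ℝ)+2) := by
      refine ⟨⌈2*(t:ℝ)/(1-(t:ℝ))⌉₊ + 1, Nat.succ_pos _, ?_⟩
      set L : ℕ := ⌈2*(t:ℝ)/(1-(t:ℝ))⌉₊ + 1 with hLdef
      have h1t : (0:ℝ) < 1 - t := by linarith
      have hceil : 2*(t:ℝ)/(1-(t:ℝ)) ≤ (L:ℝ) := by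
        refine le_trans (Nat.le_ceil _) ?_
        exact_mod_cast Nat.le_succ _
      rw [div_le_iff₀ h1t] at hceil
      rw [le_div_iff₀ (by positivity)]
      nlinarith
    obtain ⟨M, hM⟩ := exists_M hε L
    calc (t:ℝ≥0∞) ≤ (((L:ℝ≥0)/((L:ℝ≥0)+2) : ℝ≥0) : ℝ≥0∞) := by
          apply ENNReal.coe_le_coe.2
          rw [← NNReal.coe_le_coe]
          push_cast
          exact htL
      _ ≤ dimH (Kset L M) := dimH_Kset hL M
      _ ≤ dimH (Gset ε) := dimH_mono (Kset_subset_Gset hε hL hM)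

lemma gBit_not (c : Bool) (w : ℝ) : gBit (!c) (1 - w) = 1 - gBit c w := by
  cases c
  · show gBit true (1-w) = 1 - gBit false w
    unfold gBit
    rw [if_pos rfl, if_neg Bool.false_ne_true]
    ring
  · show gBit false (1-w) = 1 - gBit true w
    unfold gBit
    rw [if_pos rfl, if_neg Bool.false_ne_true]
    ring

lemma pPre_not (b : ℕ → Bool) (z : ℝ) :
    ∀ n, pPre (fun i => !(b i)) n z = 1 - pPre b n (1 - z) := by
  intro n
  induction n with
  | zero => show z = 1 - (1 - z); ring
  | succ n ih =>
    show gBit (!(b n)) (pPre (fun i => !(b i)) n z)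
      = 1 - gBit (b n) (pPre b n (1 - z))
    rw [ih, ← gBit_not]

lemma fBin_not (b : ℕ → Bool) : fBin (fun i => !(b i)) = 1 - fBin b := by
  have h : ∀ i, e (fun i => !(b i)) i = 1/2^(i+1) - e b i := by
    intro i
    cases hb : b i <;> simp [e, hb]
  calc fBin (fun i => !(b i)) = ∑' i, ((1:ℝ)/2^(i+1) - e b i) := tsum_congr h
    _ = (∑' i, (1:ℝ)/2^(i+1)) - ∑' i, e b i := Summable.tsum_sub summable_geom' (summable_e b)
    _ = 1 - fBin b := by rw [tsum_geom']; rfl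

lemma neg_image_subset_Bset {ε : ℝ} :
    (fun x : ℝ => 1 - x) '' Gset (1-ε) ⊆ Bset ε := by
  rintro y ⟨x, ⟨b, rfl, htend⟩, rfl⟩
  refine ⟨fun i => !(b i), fBin_not b, ?_⟩
  have heq : (fun n => pPre (fun i => !(b i)) n ε) = fun n => 1 - pPre b n (1-ε) :=
    funext fun n => pPre_not b ε n
  rw [heq]
  have h1 : Tendsto (fun n : ℕ => (1:ℝ) - pPre b n (1-ε)) atTop (nhds ((1:ℝ) - 0)) :=
    Tendsto.sub tendsto_const_nhds htend
  simpa using h1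

lemma isometry_reflect : Isometry (fun x : ℝ => 1 - x) :=
  Isometry.of_dist_eq fun x y => by
    have h : (1:ℝ) - x - (1 - y) = y - x := by ring
    rw [Real.dist_eq, Real.dist_eq, h, abs_sub_comm]

lemma dimH_Bset {ε : ℝ} (hε : ε ∈ Set.Ioo (0:ℝ) 1) : dimH (Bset ε) = 1 := by
  apply le_antisymm
  · calc dimH (Bset ε) ≤ dimH (Icc (0:ℝ) 1) := dimH_mono (Bset_subset_Icc ε)
      _ = 1 := dimH_Icc01
  · have h1ε : (1-ε) ∈ Set.Ioo (0:ℝ) 1 := ⟨by linarith [hε.2], by linarith [hε.1]⟩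
    calc (1:ℝ≥0∞) = dimH (Gset (1-ε)) := (dimH_Gset h1ε).symm
      _ = dimH ((fun x : ℝ => 1 - x) '' Gset (1-ε)) := (isometry_reflect.dimH_image _).symm
      _ ≤ dimH (Bset ε) := dimH_mono neg_image_subset_Bset

end BEC

/-- The Hausdorff dimensions of the sets of good and bad channels are both `1`. -/
theorem good_bad_dimH :
    ∀ ε ∈ Set.Ioo (0 : ℝ) 1, dimH (Gset ε) = 1 ∧ dimH (Bset ε) = 1 :=
  fun _ hε => ⟨BEC.dimH_Gset hε, BEC.dimH_Bset hε⟩
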